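/- Let β be real and nonzero, ε = e^{ikℓ} with kℓ ∉ πℤ, ζ = cos kℓ + β sin kℓ, and define t_N = −ε^{1−N}/(ε U_{N−2}(ζ) − (1+iβ)U_{N−1}(ζ)), r_N = iβ U_{N−1}(ζ)/(ε U_{N−2}(ζ) − (1+iβ)U_{N−1}(ζ)). Then |t_N|² = 1/(1 + β² U_{N−1}(ζ)²) and |r_N|² + |t_N|² = 1. -/

import Mathlib

open Complex Polynomial

lemma U_pell (R : Type*) [CommRing R] (n : ℤ) :
    Chebyshev.U R (n + 1) ^ 2 + Chebyshev.U R n ^ 2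
      - 2 * X * Chebyshev.U R (n + 1) * Chebyshev.U R n = 1 := by
  induction n using Polynomial.Chebyshev.induct with
  | zero => simp [Chebyshev.U_zero, Chebyshev.U_one]; ring
  | one => simp [Chebyshev.U_one, Chebyshev.U_two]; ring
  | add_two n h1 h2 =>
      rw [show ((n:ℤ)+1+1) = (n:ℤ)+2 from by ring] at h1
      have e3 := Chebyshev.U_add_two R ((n:ℤ)+1)
      rw [show ((n:ℤ)+1+2) = (n:ℤ)+2+1 from by ring,
        show ((n:ℤ)+1+1) = (n:ℤ)+2 from by ring] at e3
      linear_combination h1 + (Chebyshev.U R ((n:ℤ)+2+1) - Chebyshev.U R ((n:ℤ)+1)) * e3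
  | neg_add_one n h1 h2 =>
      rw [show (-(n:ℤ)-1+1) = -(n:ℤ) from by ring]
      have e := Chebyshev.U_add_two R (-(n:ℤ)-1)
      rw [show (-(n:ℤ)-1+2) = -(n:ℤ)+1 from by ring,
        show (-(n:ℤ)-1+1) = -(n:ℤ) from by ring] at e
      linear_combination h1 + (Chebyshev.U R (-(n:ℤ)-1) - Chebyshev.U R (-(n:ℤ)+1)) * e

/-- Comb-graph transmission and reflection probabilities:
`|t_N|² = 1/(1+β²U_{N-1}(ζ)²)` and `|r_N|² + |t_N|² = 1`. -/
theorem comb_graph_probabilities (β k ℓ : ℝ) (hβ : β ≠ 0)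
    (hkl : ∀ m : ℤ, k * ℓ ≠ m * Real.pi)
    (ε : ℂ) (hε : ε = Complex.exp (Complex.I * k * ℓ))
    (ζ : ℝ) (hζ : ζ = Real.cos (k * ℓ) + β * Real.sin (k * ℓ))
    (N : ℕ) (hN : 1 ≤ N)
    (tN rN : ℂ)
    (htN : tN = -ε ^ (1 - (N : ℤ)) /
      (ε * (Polynomial.Chebyshev.U ℂ ((N : ℤ) - 2)).eval (ζ : ℂ)
        - (1 + Complex.I * β) * (Polynomial.Chebyshev.U ℂ ((N : ℤ) - 1)).eval (ζ : ℂ)))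
    (hrN : rN = Complex.I * β * (Polynomial.Chebyshev.U ℂ ((N : ℤ) - 1)).eval (ζ : ℂ) /
      (ε * (Polynomial.Chebyshev.U ℂ ((N : ℤ) - 2)).eval (ζ : ℂ)
        - (1 + Complex.I * β) * (Polynomial.Chebyshev.U ℂ ((N : ℤ) - 1)).eval (ζ : ℂ))) :
    ‖tN‖ ^ 2 =
      1 / (1 + β ^ 2 * ((Polynomial.Chebyshev.U ℝ ((N : ℤ) - 1)).eval ζ) ^ 2) ∧
    ‖rN‖ ^ 2 + ‖tN‖ ^ 2 = 1 := by
  set a : ℝ := (Chebyshev.U ℝ ((N : ℤ) - 2)).eval ζ with ha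
  set b : ℝ := (Chebyshev.U ℝ ((N : ℤ) - 1)).eval ζ with hb
  -- complex evals are coercions of real evals
  have hmap : ∀ n : ℤ, (Chebyshev.U ℂ n).eval (ζ : ℂ) = (((Chebyshev.U ℝ n).eval ζ : ℝ) : ℂ) := by
    intro n
    have h := Polynomial.eval₂_at_apply (p := Chebyshev.U ℝ n) (algebraMap ℝ ℂ) ζ
    rw [← Polynomial.eval_map, Chebyshev.map_U] at h
    simpa using h
  -- Pell identity
  have hpell : b ^ 2 + a ^ 2 - 2 * ζ * b * a = 1 := by
    have := congrArg (Polynomial.eval ζ) (U_pell ℝ ((N : ℤ) - 2))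
    rw [show ((N:ℤ)-2+1) = (N:ℤ)-1 from by ring] at this
    simpa [ha, hb] using this
  set c : ℝ := Real.cos (k * ℓ) with hc
  set s : ℝ := Real.sin (k * ℓ) with hs
  have hcs : c ^ 2 + s ^ 2 = 1 := by
    rw [hc, hs]; linear_combination Real.sin_sq_add_cos_sq (k * ℓ)
  have hε' : ε = (c : ℂ) + (s : ℂ) * Complex.I := by
    rw [hε, show Complex.I * (k : ℂ) * (ℓ : ℂ) = ((k * ℓ : ℝ) : ℂ) * Complex.I by
      push_cast; ring, Complex.exp_mul_I, hc, hs]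
    rw [← Complex.ofReal_cos, ← Complex.ofReal_sin]
  set D : ℂ := ε * (Chebyshev.U ℂ ((N : ℤ) - 2)).eval (ζ : ℂ)
      - (1 + Complex.I * β) * (Chebyshev.U ℂ ((N : ℤ) - 1)).eval (ζ : ℂ) with hD
  subst hζ
  have hDval : ‖D‖ ^ 2 = 1 + β ^ 2 * b ^ 2 := by
    rw [Complex.sq_norm, hD, hmap, hmap, ← ha, ← hb, hε']
    simp only [Complex.normSq_apply, Complex.add_re, Complex.add_im, Complex.mul_re,
      Complex.mul_im, Complex.sub_re, Complex.sub_im, Complex.ofReal_re, Complex.ofReal_im,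
      Complex.I_re, Complex.I_im, Complex.one_re, Complex.one_im]
    linear_combination a ^ 2 * hcs + hpell
  have hpos : (0 : ℝ) < 1 + β ^ 2 * b ^ 2 := by positivity
  have hDne : D ≠ 0 := by
    intro h
    rw [h] at hDval
    simp at hDval
    nlinarith
  have habsε : ‖ε‖ = 1 := by
    rw [hε, Complex.norm_exp]
    simp
  have ht2 : ‖tN‖ ^ 2 = 1 / (1 + β ^ 2 * b ^ 2) := by
    rw [htN, norm_div, norm_neg, norm_zpow, habsε, one_zpow,
      div_pow, one_pow, hDval]
  have hr2 : ‖rN‖ ^ 2 = β ^ 2 * b ^ 2 / (1 + β ^ 2 * b ^ 2) := by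
    rw [hrN, norm_div, div_pow, hDval]
    congr 1
    rw [norm_mul, norm_mul, Complex.norm_I, one_mul, Complex.norm_real, Real.norm_eq_abs, hmap, ← hb,
      Complex.norm_real, Real.norm_eq_abs, mul_pow, _root_.sq_abs, _root_.sq_abs]
  refine ⟨ht2, ?_⟩
  rw [ht2, hr2, ← add_div, div_eq_one_iff_eq hpos.ne']
  ring
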